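/- Let G be a connected undirected graph with n nodes and incidence matrix B ∈ ℝ^{n×m}, E = [I_p;0] with p ≥ 1, Q ∈ ℝ^{p×p} diagonal with strictly positive diagonal entries, r ∈ ℝ^p, s ∈ ℝ, d ∈ ℝ^n, and let Ψ(x̄) = −B_c γ(B_cᵀ h(x̄)) − E_c η(E_cᵀ h(x̄)) be fixed (x̄ a given point), where B_c is an incidence matrix of a graph on the same node set. Consider minimizing C(u) = ½uᵀQu + rᵀu + s over all u ∈ ℝ^p for which there exists λ ∈ ℝ^m with 0 = Ψ(x̄) − Bλ + Eu − d. Then the unique minimizer is û = Q⁻¹(λ̂·1_p − r), where λ̂ = (1_nᵀ d̂ + 1_pᵀQ⁻¹r)/(1_pᵀQ⁻¹1_p) and d̂ = d + E_c η(E_cᵀ h(x̄)). -/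
import Mathlib


open Matrix BigOperators Filter Topology MeasureTheory

/-- An undirected graph on `Fin n` with `m` edges, each edge given an arbitrary
orientation: edge `k` goes from its positive end `pos k` to its negative end `neg k`. -/
structure OrientedGraph (n m : ℕ) where
  pos : Fin m → Fin n
  neg : Fin m → Fin n
  ne_ends : ∀ k, pos k ≠ neg k

namespace OrientedGraph

variable {n m : ℕ}

/-- The oriented incidence matrix `B ∈ ℝ^{n×m}`. -/
def inc (G : OrientedGraph n m) : Matrix (Fin n) (Fin m) ℝ :=
  Matrix.of fun i k => if i = G.pos k then (1 : ℝ) else if i = G.neg k then -1 else 0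

/-- Adjacency in the underlying undirected graph. -/
def Adj (G : OrientedGraph n m) (i j : Fin n) : Prop :=
  ∃ k, (G.pos k = i ∧ G.neg k = j) ∨ (G.pos k = j ∧ G.neg k = i)

/-- Connectedness of the underlying undirected graph. -/
def Connected (G : OrientedGraph n m) : Prop :=
  ∀ i j : Fin n, Relation.ReflTransGen G.Adj i j

end OrientedGraph

/-- The matrix `E = [I_p ; 0_{(n-p)×p}]` selecting the first `p` nodes. -/
def selE (n p : ℕ) : Matrix (Fin n) (Fin p) ℝ :=
  Matrix.of fun i j => if (i : ℕ) = (j : ℕ) then 1 else 0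

/-- Componentwise application of a family of scalar functions. -/
def cw {k : ℕ} (f : Fin k → ℝ → ℝ) (x : Fin k → ℝ) : Fin k → ℝ :=
  fun i => f i (x i)

/-- `λ* = (1ₙᵀ d + 1ₚᵀ Q⁻¹ r)/(1ₚᵀ Q⁻¹ 1ₚ)` for `Q = diag q`. -/
noncomputable def lamStar {n p : ℕ} (q r : Fin p → ℝ) (d : Fin n → ℝ) : ℝ :=
  ((∑ i, d i) + ∑ i, r i / q i) / (∑ i, (q i)⁻¹)

/-- The optimal input `ū = Q⁻¹(λ*·1ₚ − r)`. -/
noncomputable def uOpt {n p : ℕ} (q r : Fin p → ℝ) (d : Fin n → ℝ) : Fin p → ℝ :=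
  fun i => (lamStar q r d - r i) / q i

/-- The cost `C(u) = ½ uᵀQu + rᵀu + s` for `Q = diag q`. -/
noncomputable def cost {p : ℕ} (q r : Fin p → ℝ) (s : ℝ) (u : Fin p → ℝ) : ℝ :=
  (1 / 2) * (∑ i, q i * u i ^ 2) + (∑ i, r i * u i) + s

/-- `L` is the Laplacian matrix of a balanced, strongly connected weighted digraph:
nonpositive off-diagonal entries, zero row sums, zero column sums, and the digraph
whose arcs are the pairs with `L i j < 0` is strongly connected. -/
structure IsBalancedStronglyConnectedLaplacian {p : ℕ} (L : Matrix (Fin p) (Fin p) ℝ) : Prop where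
  offdiag_nonpos : ∀ i j, i ≠ j → L i j ≤ 0
  rowsum : L.mulVec (fun _ => 1) = 0
  colsum : Matrix.vecMul (fun _ => 1) L = 0
  sconn : ∀ i j : Fin p, Relation.ReflTransGen (fun a b => a ≠ b ∧ L a b < 0) i j

/-- The matrix `E_c ∈ ℝ^{n×p_c}` with exactly one entry `1` per column, indicating at
which node each state-dependent inflow/outflow is located. -/
def locMatrix (n : ℕ) {pc : ℕ} (loc : Fin pc → Fin n) : Matrix (Fin n) (Fin pc) ℝ :=
  Matrix.of fun i k => if i = loc k then 1 else 0

lemma inc_col_split {n m : ℕ} (G : OrientedGraph n m) (i : Fin n) (k : Fin m) :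
    G.inc i k = (if i = G.pos k then (1:ℝ) else 0) + (if i = G.neg k then -1 else 0) := by
  by_cases h1 : i = G.pos k
  · have : i ≠ G.neg k := h1 ▸ G.ne_ends k
    simp [OrientedGraph.inc, h1, this, G.ne_ends k]
  · by_cases h2 : i = G.neg k <;> simp [OrientedGraph.inc, h1, h2, (G.ne_ends k).symm]

lemma sum_inc_col {n m : ℕ} (G : OrientedGraph n m) (k : Fin m) :
    ∑ i, G.inc i k = 0 := by
  simp [inc_col_split, Finset.sum_add_distrib]

lemma sum_inc_mulVec {n m : ℕ} (G : OrientedGraph n m) (w : Fin m → ℝ) :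
    ∑ i, G.inc.mulVec w i = 0 := by
  simp only [Matrix.mulVec, dotProduct]
  rw [Finset.sum_comm]
  simp [← Finset.sum_mul, sum_inc_col]

lemma inc_mulVec_single {n m : ℕ} (G : OrientedGraph n m) (k : Fin m) :
    G.inc.mulVec (Pi.single k 1) = Pi.single (G.pos k) 1 - Pi.single (G.neg k) 1 := by
  funext i
  simp only [Matrix.mulVec, dotProduct, Pi.single_apply, mul_ite, mul_one, mul_zero,
    Finset.sum_ite_eq', Finset.mem_univ, if_true, Pi.sub_apply]
  rw [inc_col_split]
  by_cases h1 : i = G.pos k <;> by_cases h2 : i = G.neg k <;>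
    simp_all [G.ne_ends k, (G.ne_ends k).symm]

lemma single_sub_mem {n m : ℕ} (G : OrientedGraph n m) {i j : Fin n}
    (hij : Relation.ReflTransGen G.Adj i j) :
    (Pi.single i 1 - Pi.single j 1 : Fin n → ℝ) ∈ LinearMap.range G.inc.mulVecLin := by
  induction hij with
  | refl => simp
  | @tail b c _ hadj ih =>
      have hbc : (Pi.single b 1 - Pi.single c 1 : Fin n → ℝ) ∈ LinearMap.range G.inc.mulVecLin := by
        obtain ⟨k, hk | hk⟩ := hadj
        · exact ⟨Pi.single k 1, by rw [Matrix.mulVecLin_apply, inc_mulVec_single, hk.1, hk.2]⟩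
        · refine ⟨-Pi.single k 1, ?_⟩
          rw [map_neg, Matrix.mulVecLin_apply, inc_mulVec_single, hk.1, hk.2]
          abel
      have := Submodule.add_mem _ ih hbc
      simpa using this

lemma exists_lam {n m : ℕ} (G : OrientedGraph n m) (hG : G.Connected) (hn : 0 < n)
    (v : Fin n → ℝ) (hv : ∑ i, v i = 0) :
    ∃ lam : Fin m → ℝ, G.inc.mulVec lam = v := by
  set i0 : Fin n := ⟨0, hn⟩
  have hmem : v ∈ LinearMap.range G.inc.mulVecLin := by
    have hrepr : v = ∑ i, v i • (Pi.single i 1 - Pi.single i0 1 : Fin n → ℝ) := by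
      funext j
      simp only [Finset.sum_apply, Pi.smul_apply, Pi.sub_apply, Pi.single_apply, smul_eq_mul,
        mul_sub]
      rw [Finset.sum_sub_distrib]
      simp [mul_ite, Finset.sum_ite_eq, ← Finset.sum_mul, hv]
    rw [hrepr]
    exact Submodule.sum_mem _ fun i _ =>
      Submodule.smul_mem _ _ (single_sub_mem G (hG i i0))
  obtain ⟨lam, hlam⟩ := hmem
  exact ⟨lam, by rw [← Matrix.mulVecLin_apply]; exact hlam⟩


lemma sum_selE_mulVec {n p : ℕ} (hpn : p ≤ n) (u : Fin p → ℝ) :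
    ∑ i, (selE n p).mulVec u i = ∑ j, u j := by
  simp only [Matrix.mulVec, dotProduct, selE, Matrix.of_apply, ite_mul, one_mul, zero_mul]
  rw [Finset.sum_comm]
  refine Finset.sum_congr rfl fun j _ => ?_
  have : ∀ i : Fin n, ((i : ℕ) = (j : ℕ)) ↔ i = Fin.castLE hpn j := by
    intro i; rw [Fin.ext_iff]; simp
  simp [this]

lemma sum_locMatrix_mulVec {n pc : ℕ} (loc : Fin pc → Fin n) (w : Fin pc → ℝ) :
    ∑ i, (locMatrix n loc).mulVec w i = ∑ k, w k := by
  simp only [Matrix.mulVec, dotProduct, locMatrix, Matrix.of_apply, ite_mul, one_mul,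
    zero_mul]
  rw [Finset.sum_comm]
  simp

lemma sum_uOpt {n p : ℕ} (hp : 0 < p) (q r : Fin p → ℝ) (hq : ∀ i, 0 < q i) (d : Fin n → ℝ) :
    ∑ i, uOpt q r d i = ∑ i, d i := by
  have hs : (∑ i, (q i)⁻¹) ≠ 0 := by
    have : 0 < ∑ i, (q i)⁻¹ :=
      Finset.sum_pos (fun i _ => inv_pos.mpr (hq i)) (Finset.univ_nonempty_iff.mpr ⟨⟨0, hp⟩⟩)
    exact this.ne'
  have hqne : ∀ i, q i ≠ 0 := fun i => (hq i).ne'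
  simp only [uOpt, sub_div]
  rw [Finset.sum_sub_distrib]
  have h1 : ∑ i, lamStar q r d / q i = lamStar q r d * ∑ i, (q i)⁻¹ := by
    rw [Finset.mul_sum]; exact Finset.sum_congr rfl fun i _ => div_eq_mul_inv _ _
  rw [h1, lamStar, div_mul_cancel₀ _ hs]
  ring

lemma cost_split {p : ℕ} (hp : 0 < p) (q r : Fin p → ℝ) (hq : ∀ i, 0 < q i) (s lam : ℝ)
    (u : Fin p → ℝ) (ub : Fin p → ℝ) (hub : ∀ i, ub i = (lam - r i) / q i) :
    cost q r s u = cost q r s ub + (1/2) * (∑ i, q i * (u i - ub i)^2)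
      + lam * ((∑ i, u i) - ∑ i, ub i) := by
  have key : ∀ i, (1/2) * (q i * u i ^ 2) + r i * u i
      = (1/2) * (q i * ub i ^ 2) + r i * ub i + (1/2) * (q i * (u i - ub i)^2)
        + lam * (u i - ub i) := by
    intro i
    have hqi : q i ≠ 0 := (hq i).ne'
    rw [hub i]
    field_simp
    ring
  simp only [cost]
  have : ∀ v : Fin p → ℝ, (1/2) * (∑ i, q i * v i ^ 2) + (∑ i, r i * v i)
      = ∑ i, ((1/2) * (q i * v i ^ 2) + r i * v i) := by
    intro v; rw [Finset.sum_add_distrib, Finset.mul_sum]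
  have hsum : ∑ i, ((1/2) * (q i * u i ^ 2) + r i * u i)
      = ∑ i, ((1/2) * (q i * ub i ^ 2) + r i * ub i)
        + (1/2) * (∑ i, q i * (u i - ub i)^2) + lam * ((∑ i, u i) - ∑ i, ub i) := by
    rw [Finset.sum_congr rfl fun i _ => key i]
    rw [Finset.sum_add_distrib, Finset.sum_add_distrib, ← Finset.mul_sum, ← Finset.mul_sum,
      Finset.sum_sub_distrib]
  have h1 := this u
  have h2 := this ub
  linarith [hsum]

/-- With the compartmental term `Ψ(x̄)` fixed, the unique minimizer
of `C(u)` subject to `0 = Ψ(x̄) − Bλ + Eu − d` is `û = Q⁻¹(λ̂·1ₚ − r)` with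
`λ̂ = (1ₙᵀd̂ + 1ₚᵀQ⁻¹r)/(1ₚᵀQ⁻¹1ₚ)` and `d̂ = d + E_c η(E_cᵀ h(x̄))`. -/
theorem uOpt_compartmental_unique_minimizer {n m p l pc : ℕ} (hp : 0 < p) (hpn : p ≤ n)
    (G : OrientedGraph n m) (hG : G.Connected) (Gc : OrientedGraph n l)
    (loc : Fin pc → Fin n)
    (γ : Fin l → ℝ → ℝ) (hγ : ∀ k, Monotone (γ k) ∧ ContDiff ℝ 1 (γ k))
    (η : Fin pc → ℝ → ℝ) (hη : ∀ i, Monotone (η i) ∧ ContDiff ℝ 1 (η i))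
    (h : Fin n → ℝ → ℝ) (hh : ∀ i, StrictMono (h i))
    (q r : Fin p → ℝ) (hq : ∀ i, 0 < q i) (s : ℝ) (d : Fin n → ℝ)
    (xb : Fin n → ℝ) :
    -- with `Ψ(x̄)` and `d̂` as follows:
    ∀ Psixb dhat : Fin n → ℝ,
    Psixb = -(Gc.inc.mulVec (cw γ ((Gc.inc)ᵀ.mulVec (cw h xb)))) -
      (locMatrix n loc).mulVec (cw η ((locMatrix n loc)ᵀ.mulVec (cw h xb))) →
    dhat = d + (locMatrix n loc).mulVec (cw η ((locMatrix n loc)ᵀ.mulVec (cw h xb))) →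
    (∃ lam : Fin m → ℝ,
      0 = Psixb - G.inc.mulVec lam + (selE n p).mulVec (uOpt q r dhat) - d) ∧
    ∀ u : Fin p → ℝ,
      (∃ lam : Fin m → ℝ, 0 = Psixb - G.inc.mulVec lam + (selE n p).mulVec u - d) →
      u ≠ uOpt q r dhat → cost q r s (uOpt q r dhat) < cost q r s u := by
  intro Psixb dhat hPsi hdhat
  have hn : 0 < n := lt_of_lt_of_le hp hpn
  set t := (locMatrix n loc).mulVec (cw η ((locMatrix n loc)ᵀ.mulVec (cw h xb))) with ht
  have hPsisum : ∑ i, Psixb i = -∑ i, t i := by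
    rw [hPsi]
    simp only [Pi.sub_apply, Pi.neg_apply]
    rw [Finset.sum_sub_distrib, Finset.sum_neg_distrib]
    rw [sum_inc_mulVec Gc]
    simp [ht]
  have hdsum : ∑ i, dhat i = (∑ i, d i) + ∑ i, t i := by
    rw [hdhat]
    simp only [Pi.add_apply]
    rw [Finset.sum_add_distrib]
  have feas : ∀ u : Fin p → ℝ,
      (∃ lam : Fin m → ℝ, 0 = Psixb - G.inc.mulVec lam + (selE n p).mulVec u - d) ↔
      ∑ j, u j = ∑ i, dhat i := by
    intro u
    constructor
    · rintro ⟨lam, hlam⟩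
      have hsum := congrArg (fun v : Fin n → ℝ => ∑ i, v i) hlam
      simp only [Pi.zero_apply, Finset.sum_const_zero, Pi.sub_apply, Pi.add_apply] at hsum
      rw [Finset.sum_sub_distrib, Finset.sum_add_distrib, Finset.sum_sub_distrib,
        sum_inc_mulVec G, sum_selE_mulVec hpn] at hsum
      rw [hdsum]
      linarith
    · intro hu
      obtain ⟨lam, hlam⟩ := exists_lam G hG hn (Psixb + (selE n p).mulVec u - d) (by
        simp only [Pi.sub_apply, Pi.add_apply]
        rw [Finset.sum_sub_distrib, Finset.sum_add_distrib, sum_selE_mulVec hpn, hPsisum]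
        rw [hdsum] at hu
        linarith)
      refine ⟨lam, ?_⟩
      rw [hlam]
      funext i
      simp only [Pi.zero_apply, Pi.sub_apply, Pi.add_apply]
      ring
  constructor
  · exact (feas (uOpt q r dhat)).mpr (sum_uOpt hp q r hq dhat)
  · intro u hu hne
    have hsu : ∑ j, u j = ∑ i, dhat i := (feas u).mp hu
    have hub : ∀ i, uOpt q r dhat i = (lamStar q r dhat - r i) / q i := fun i => rfl
    have hsum_eq : (∑ i, u i) - ∑ i, uOpt q r dhat i = 0 := by
      rw [hsu, sum_uOpt hp q r hq dhat, sub_self]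
    rw [cost_split hp q r hq s (lamStar q r dhat) u (uOpt q r dhat) hub, hsum_eq, mul_zero,
      add_zero]
    have hpos : 0 < ∑ i, q i * (u i - uOpt q r dhat i) ^ 2 := by
      obtain ⟨i0, hi0⟩ : ∃ i, u i ≠ uOpt q r dhat i := by
        by_contra hc
        push_neg at hc
        exact hne (funext hc)
      refine Finset.sum_pos' (fun i _ => mul_nonneg (hq i).le (sq_nonneg _))
        ⟨i0, Finset.mem_univ _, ?_⟩
      have hne0 : u i0 - uOpt q r dhat i0 ≠ 0 := sub_ne_zero.mpr hi0
      have h2 : 0 < (u i0 - uOpt q r dhat i0) ^ 2 := by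
        rcases hne0.lt_or_gt with h' | h' <;> nlinarith
      exact mul_pos (hq i0) h2
    linarith
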